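/- Let κ ∈ (0,1), ζ ∈ (0,1), and let (α_k)_{k∈ℕ} be positive reals with α_k = Θ((k+1)^{−1}). Define b_k := Σ_{i=0}^{k} κ^{k−i} α_i, b_{−1} := 0, T(k) := the least i ≤ k such that κ^{k−j} b_j ≥ b_k^{1+ζ} for all j ∈ [i, k], and a_k := Σ_{i=T(k)}^{k} κ^{k−i} α_i. Then for all sufficiently large k: (1) b_k/2 ≤ a_k ≤ b_k, and (2) the discarded tail satisfies Σ_{i=0}^{T(k)−1} κ^{k−i} α_i = κ^{k−T(k)+1} b_{T(k)−1} < b_k^{1+ζ}. -/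

import Mathlib

private lemma geomB (κ : ℝ) (h0 : 0 < κ) (h1 : κ < 1) (n : ℕ) :
    ∑ i ∈ Finset.range n, κ ^ i ≤ 1 / (1 - κ) := by
  have h2 : (0:ℝ) < 1 - κ := by linarith
  rw [geom_sum_eq (by linarith)]
  have e : (κ^n - 1)/(κ-1) = (1 - κ^n)/(1-κ) := by rw [← neg_div_neg_eq]; ring_nf
  rw [e, div_le_div_iff₀ h2 h2]
  have := pow_nonneg h0.le n
  nlinarith

theorem momentum_window_estimates (κ ζ : ℝ)
    (hκ : κ ∈ Set.Ioo (0 : ℝ) 1) (hζ : ζ ∈ Set.Ioo (0 : ℝ) 1)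
    (α : ℕ → ℝ) (hαpos : ∀ k, 0 < α k)
    (hΘ : ∃ c₁ c₂ : ℝ, ∃ N : ℕ, 0 < c₁ ∧ c₁ ≤ c₂ ∧ ∀ k ≥ N,
      c₁ / ((k : ℝ) + 1) ≤ α k ∧ α k ≤ c₂ / ((k : ℝ) + 1))
    (b : ℕ → ℝ) (hb : ∀ k, b k = ∑ i ∈ Finset.range (k + 1), κ ^ (k - i) * α i)
    (T : ℕ → ℕ)
    (hT : ∀ k, T k = sInf {i : ℕ | i ≤ k ∧ ∀ j, i ≤ j → j ≤ k →
      b k ^ (1 + ζ) ≤ κ ^ (k - j) * b j})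
    (a : ℕ → ℝ) (ha : ∀ k, a k = ∑ i ∈ Finset.Icc (T k) k, κ ^ (k - i) * α i) :
    ∃ K : ℕ, ∀ k ≥ K,
      (b k / 2 ≤ a k ∧ a k ≤ b k) ∧
      (∑ i ∈ Finset.range (T k), κ ^ (k - i) * α i) =
        κ ^ (k - T k + 1) * (if T k = 0 then 0 else b (T k - 1)) ∧
      (∑ i ∈ Finset.range (T k), κ ^ (k - i) * α i) < b k ^ (1 + ζ) := by
  obtain ⟨hκ0, hκ1⟩ := hκ
  obtain ⟨hζ0, hζ1⟩ := hζ
  obtain ⟨c₁, c₂, N, hc₁, hc₁₂, hc⟩ := hΘ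
  have h1κ : (0:ℝ) < 1 - κ := by linarith
  have hc2pos : 0 < c₂ := hc₁.trans_le hc₁₂
  have hbpos : ∀ k, 0 < b k := by
    intro k; rw [hb]
    apply Finset.sum_pos
    · intro i _; exact mul_pos (pow_pos hκ0 _) (hαpos i)
    · exact ⟨0, Finset.mem_range.2 (Nat.succ_pos k)⟩
  have hgeom : ∀ k : ℕ, ∑ i ∈ Finset.range (k+1), κ ^ (k - i) ≤ 1 / (1 - κ) := by
    intro k
    have e : ∑ i ∈ Finset.range (k+1), κ ^ (k - i) = ∑ i ∈ Finset.range (k+1), κ ^ i := by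
      rw [← Finset.sum_range_reflect]
      apply Finset.sum_congr rfl
      intro i hi
      have := Finset.mem_range.1 hi
      congr 1
      omega
    rw [e]; exact geomB κ hκ0 hκ1 (k+1)
  set M : ℝ := c₂ + ∑ j ∈ Finset.range N, α j with hM
  have hsumN : 0 ≤ ∑ j ∈ Finset.range N, α j := Finset.sum_nonneg fun j _ => (hαpos j).le
  have hMpos : 0 < M := by positivity
  have hαM : ∀ i, α i ≤ M := by
    intro i
    rcases lt_or_ge i N with h | h
    · have : α i ≤ ∑ j ∈ Finset.range N, α j :=
        Finset.single_le_sum (fun j _ => (hαpos j).le) (Finset.mem_range.2 h)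
      linarith
    · have h2 := (hc i h).2
      have h3 : c₂ / ((i:ℝ)+1) ≤ c₂ := by
        rw [div_le_iff₀ (by positivity)]
        nlinarith [Nat.cast_nonneg (α := ℝ) i]
      linarith
  set B : ℝ := M / (1 - κ) with hB
  have hBpos : 0 < B := by positivity
  have hbB : ∀ k, b k ≤ B := by
    intro k
    rw [hb]
    calc ∑ i ∈ Finset.range (k+1), κ ^ (k-i) * α i
        ≤ ∑ i ∈ Finset.range (k+1), κ ^ (k-i) * M :=
          Finset.sum_le_sum fun i _ =>
            mul_le_mul_of_nonneg_left (hαM i) (pow_nonneg hκ0.le _)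
      _ = (∑ i ∈ Finset.range (k+1), κ ^ (k-i)) * M := by rw [Finset.sum_mul]
      _ ≤ (1/(1-κ)) * M := mul_le_mul_of_nonneg_right (hgeom k) hMpos.le
      _ = B := by rw [hB]; ring
  have hsplitb : ∀ m k : ℕ, m ≤ k → b k = κ ^ (k - m) * b m +
      ∑ i ∈ Finset.Ico (m+1) (k+1), κ ^ (k - i) * α i := by
    intro m k hmk
    rw [hb k, hb m, Finset.mul_sum,
      ← Finset.sum_range_add_sum_Ico _ (by omega : m+1 ≤ k+1)]
    congr 1
    apply Finset.sum_congr rfl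
    intro i hi
    have hi' : i ≤ m := by
      have := Finset.mem_range.1 hi; omega
    rw [← mul_assoc, ← pow_add]
    congr 2
    omega
  have hsmall : ∀ ε : ℝ, 0 < ε → ∃ K : ℕ, ∀ k ≥ K, b k ≤ ε := by
    intro ε hε
    obtain ⟨m₀, hm₀⟩ := exists_nat_gt (2 * c₂ / ((1-κ) * ε))
    set m := max m₀ N with hm
    have hmm₀ : (m₀ : ℝ) ≤ (m : ℝ) := by
      exact_mod_cast Nat.cast_le.2 (le_max_left _ _)
    have hmbig : 2 * c₂ < (1-κ) * ε * ((m:ℝ) + 2) := by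
      have h1 : 2 * c₂ / ((1-κ) * ε) < (m:ℝ) := lt_of_lt_of_le hm₀ hmm₀
      rw [div_lt_iff₀ (by positivity)] at h1
      nlinarith [mul_pos h1κ hε]
    have htail : ∀ k, ∑ i ∈ Finset.Ico (m+1) (k+1), κ ^ (k-i) * α i ≤ ε/2 := by
      intro k
      have step1 : ∀ i ∈ Finset.Ico (m+1) (k+1),
          κ ^ (k-i) * α i ≤ κ ^ (k-i) * (c₂/((m:ℝ)+2)) := by
        intro i hi
        obtain ⟨h1, _⟩ := Finset.mem_Ico.1 hi
        have hiN : N ≤ i := by have hNm : N ≤ m := le_max_right m₀ N; omega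
        have h2 := (hc i hiN).2
        have h4 : ((m:ℝ)+2) ≤ ((i:ℝ)+1) := by
          have : m + 1 ≤ i := h1
          have : (m:ℝ) + 1 ≤ (i:ℝ) := by exact_mod_cast this
          linarith
        have h3 : c₂ / ((i:ℝ)+1) ≤ c₂ / ((m:ℝ)+2) := by
          apply div_le_div_of_nonneg_left hc2pos.le (by positivity) h4
        exact mul_le_mul_of_nonneg_left (h2.trans h3) (pow_nonneg hκ0.le _)
      calc ∑ i ∈ Finset.Ico (m+1) (k+1), κ ^ (k-i) * α i
          ≤ ∑ i ∈ Finset.Ico (m+1) (k+1), κ ^ (k-i) * (c₂/((m:ℝ)+2)) :=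
            Finset.sum_le_sum step1
        _ = (∑ i ∈ Finset.Ico (m+1) (k+1), κ ^ (k-i)) * (c₂/((m:ℝ)+2)) := by
            rw [Finset.sum_mul]
        _ ≤ (∑ i ∈ Finset.range (k+1), κ ^ (k-i)) * (c₂/((m:ℝ)+2)) := by
            apply mul_le_mul_of_nonneg_right _ (by positivity)
            apply Finset.sum_le_sum_of_subset_of_nonneg
            · intro x hx
              have := Finset.mem_Ico.1 hx
              exact Finset.mem_range.2 (by omega)
            · intro i _ _; exact pow_nonneg hκ0.le _
        _ ≤ (1/(1-κ)) * (c₂/((m:ℝ)+2)) :=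
            mul_le_mul_of_nonneg_right (hgeom k) (by positivity)
        _ = c₂ / ((1-κ) * ((m:ℝ)+2)) := by
            rw [div_mul_div_comm, one_mul]
        _ ≤ ε/2 := by
            rw [div_le_div_iff₀ (by positivity) (by norm_num)]
            nlinarith
    obtain ⟨n₀, hn₀⟩ := exists_pow_lt_of_lt_one (show (0:ℝ) < ε/(2*B) by positivity) hκ1
    refine ⟨m + n₀, fun k hk => ?_⟩
    have hmk : m ≤ k := by omega
    have hgeo : κ ^ (k - m) * b m ≤ ε/2 := by
      have h5 : κ ^ (k - m) ≤ κ ^ n₀ :=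
        pow_le_pow_of_le_one hκ0.le hκ1.le (by omega)
      have h6 : κ ^ (k - m) * b m ≤ κ ^ n₀ * B :=
        mul_le_mul h5 (hbB m) (hbpos m).le (pow_nonneg hκ0.le _)
      have h7 : κ ^ n₀ * (2*B) < ε := by
        rw [← lt_div_iff₀ (by positivity)]; exact hn₀
      nlinarith [pow_nonneg hκ0.le n₀]
    calc b k = κ ^ (k - m) * b m + ∑ i ∈ Finset.Ico (m+1) (k+1), κ ^ (k-i) * α i :=
          hsplitb m k hmk
      _ ≤ ε/2 + ε/2 := add_le_add hgeo (htail k)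
      _ = ε := by ring
  -- main part
  set ε : ℝ := (1/2 : ℝ) ^ (ζ⁻¹ : ℝ) with hε
  have hεpos : 0 < ε := Real.rpow_pos_of_pos (by norm_num) _
  obtain ⟨K, hK⟩ := hsmall ε hεpos
  refine ⟨K, fun k hk => ?_⟩
  have hbk := hK k hk
  have hε1 : ε ≤ 1 := Real.rpow_le_one (by norm_num) (by norm_num) (by positivity)
  have hbk1 : b k ≤ 1 := hbk.trans hε1
  have hbζ : b k ^ (ζ : ℝ) ≤ 1/2 := by
    calc b k ^ (ζ:ℝ) ≤ ε ^ (ζ:ℝ) := Real.rpow_le_rpow (hbpos k).le hbk hζ0.le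
      _ = (1/2 : ℝ) ^ (ζ⁻¹ * ζ) := (Real.rpow_mul (by norm_num) _ _).symm
      _ = 1/2 := by rw [inv_mul_cancel₀ (ne_of_gt hζ0), Real.rpow_one]
  have hpow : b k ^ (1+ζ) = b k * b k ^ (ζ:ℝ) := by
    rw [Real.rpow_add (hbpos k), Real.rpow_one]
  have hBk2 : b k ^ (1+ζ) ≤ b k / 2 := by
    rw [hpow]
    nlinarith [hbpos k]
  have hBk1 : b k ^ (1+ζ) ≤ b k := by
    linarith [(hbpos k), hBk2]
  have hrpos : 0 < b k ^ (1+ζ) := Real.rpow_pos_of_pos (hbpos k) _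
  have hkS : k ∈ {i : ℕ | i ≤ k ∧ ∀ j, i ≤ j → j ≤ k →
      b k ^ (1 + ζ) ≤ κ ^ (k - j) * b j} := by
    refine ⟨le_refl k, fun j hj1 hj2 => ?_⟩
    have : j = k := le_antisymm hj2 hj1
    subst this
    simpa [Nat.sub_self] using hBk1
  have hSne : {i : ℕ | i ≤ k ∧ ∀ j, i ≤ j → j ≤ k →
      b k ^ (1 + ζ) ≤ κ ^ (k - j) * b j}.Nonempty := ⟨k, hkS⟩
  have hTmem : T k ∈ {i : ℕ | i ≤ k ∧ ∀ j, i ≤ j → j ≤ k →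
      b k ^ (1 + ζ) ≤ κ ^ (k - j) * b j} := by
    rw [hT k]; exact Nat.sInf_mem hSne
  obtain ⟨hTk, hTgood⟩ := hTmem
  -- tail identity and bound
  have htid : (∑ i ∈ Finset.range (T k), κ ^ (k - i) * α i) =
      κ ^ (k - T k + 1) * (if T k = 0 then 0 else b (T k - 1)) ∧
      (∑ i ∈ Finset.range (T k), κ ^ (k - i) * α i) < b k ^ (1 + ζ) := by
    rcases Nat.eq_zero_or_pos (T k) with ht0 | htp
    · rw [ht0]
      refine ⟨by simp, by simpa using hrpos⟩
    · obtain ⟨s, hs⟩ : ∃ s, T k = s + 1 := ⟨T k - 1, by omega⟩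
      have hsk : s + 1 ≤ k := hs ▸ hTk
      have htf : (∑ i ∈ Finset.range (T k), κ ^ (k - i) * α i) = κ ^ (k - s) * b s := by
        rw [hs, hb s, Finset.mul_sum]
        apply Finset.sum_congr rfl
        intro i hi
        have hi' : i ≤ s := by have := Finset.mem_range.1 hi; omega
        rw [← mul_assoc, ← pow_add]
        congr 2
        omega
      constructor
      · rw [htf, if_neg (by omega), hs]
        have e1 : k - (s+1) + 1 = k - s := by omega
        have e2 : s + 1 - 1 = s := by omega
        rw [e1, e2]
      · rw [htf]
        have hslt : s < sInf {i : ℕ | i ≤ k ∧ ∀ j, i ≤ j → j ≤ k →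
            b k ^ (1 + ζ) ≤ κ ^ (k - j) * b j} := by
          rw [← hT k]; omega
        have hsnot := Nat.notMem_of_lt_sInf hslt
        simp only [Set.mem_setOf_eq, not_and, not_forall] at hsnot
        obtain ⟨j, hj1, hj2, hj3⟩ := hsnot (by omega)
        push_neg at hj3
        rcases Nat.lt_or_ge s j with hsj | hsj
        · exfalso
          have : T k ≤ j := by omega
          exact absurd (hTgood j this hj2) (not_le.2 hj3)
        · have : j = s := by omega
          subst this
          exact hj3
  refine ⟨?_, htid⟩
  have hsum : (∑ i ∈ Finset.range (T k), κ ^ (k - i) * α i) + a k = b k := by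
    rw [ha k, hb k, ← Finset.Ico_add_one_right_eq_Icc]
    exact Finset.sum_range_add_sum_Ico _ (by omega)
  have htnn : 0 ≤ ∑ i ∈ Finset.range (T k), κ ^ (k - i) * α i :=
    Finset.sum_nonneg fun i _ => le_of_lt (mul_pos (pow_pos hκ0 _) (hαpos i))
  have := htid.2
  constructor
  · linarith
  · linarith
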